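/- arXiv:2002.09793 — 2 statements merged into one kernel-verified Lean document; each statement's English description precedes it below -/
import Mathlib

section
/- Let u ∈ C^0(closure of the unit ball B) ∩ C^1_loc(B) with u ≡ 0 on ∂B and |∇u| ∈ L^1(B). Then for every φ ∈ C^1(closure of B) and every j ∈ {1,…,N}, ∫_B (∂_j u) φ dx = −∫_B u (∂_j φ) dx. -/
open MeasureTheory Metric Filter Topology

section Aux

lemma psi_deriv_bound : ∃ C : ℝ, 0 ≤ C ∧ ∀ t : ℝ, |deriv Real.smoothTransition t| ≤ C := by
  have hcd : Continuous (deriv Real.smoothTransition) :=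
    (Real.smoothTransition.contDiff (n := (⊤ : ℕ∞))).continuous_deriv (by exact_mod_cast le_top)
  obtain ⟨C0, hC0⟩ := (isCompact_Icc (a := (0:ℝ)) (b := 1)).exists_bound_of_continuousOn
    hcd.continuousOn
  refine ⟨max C0 0, le_max_right _ _, fun t => ?_⟩
  rcases le_or_gt t 0 with h | h
  · rcases eq_or_lt_of_le h with rfl | h
    · exact le_trans (by simpa using hC0 0 (by simp)) (le_max_left _ _)
    · have hev : Real.smoothTransition =ᶠ[nhds t] (fun _ => 0) := by
        filter_upwards [Iio_mem_nhds h] with s hs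
        exact Real.smoothTransition.zero_of_nonpos (le_of_lt hs)
      rw [hev.deriv_eq, deriv_const]
      simp
  · rcases le_or_gt t 1 with h1 | h1
    · exact le_trans (by simpa using hC0 t ⟨h.le, h1⟩) (le_max_left _ _)
    · have hev : Real.smoothTransition =ᶠ[nhds t] (fun _ => 1) := by
        filter_upwards [Ioi_mem_nhds h1] with s hs
        exact Real.smoothTransition.one_of_one_le (le_of_lt hs)
      rw [hev.deriv_eq, deriv_const]
      simp

variable {E : Type*} [NormedAddCommGroup E] [InnerProductSpace ℝ E]

noncomputable def cut (ε : ℝ) (x : E) : ℝ :=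
  Real.smoothTransition (((1-ε)^2 + ε - ‖x‖^2)/ε)

lemma cut_contDiff (ε : ℝ) : ContDiff ℝ 1 (cut (E := E) ε) := by
  apply (Real.smoothTransition.contDiff (n := 1)).comp
  exact (((contDiff_const (c := (1-ε)^2 + ε)).sub (contDiff_norm_sq ℝ)).div_const ε)

omit [InnerProductSpace ℝ E] in
lemma cut_one {ε : ℝ} (hε : 0 < ε) {x : E} (hx : ‖x‖ ≤ 1 - ε) : cut ε x = 1 := by
  apply Real.smoothTransition.one_of_one_le
  rw [le_div_iff₀ hε]
  have h0 : 0 ≤ 1 - ε := le_trans (norm_nonneg x) hx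
  nlinarith [norm_nonneg x, sq_nonneg (1 - ε - ‖x‖)]

omit [InnerProductSpace ℝ E] in
lemma cut_zero {ε : ℝ} (hε : 0 < ε) {x : E} (hx : (1-ε)^2 + ε ≤ ‖x‖^2) : cut ε x = 0 := by
  apply Real.smoothTransition.zero_of_nonpos
  apply div_nonpos_of_nonpos_of_nonneg _ hε.le
  linarith

omit [InnerProductSpace ℝ E] in
lemma cut_nonneg (ε : ℝ) (x : E) : 0 ≤ cut ε x := Real.smoothTransition.nonneg _

omit [InnerProductSpace ℝ E] in
lemma cut_le_one (ε : ℝ) (x : E) : cut ε x ≤ 1 := Real.smoothTransition.le_one _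

lemma cut_hasFDerivAt {ε : ℝ} (hε : 0 < ε) (x : E) :
    HasFDerivAt (cut ε)
      (((deriv Real.smoothTransition (((1-ε)^2 + ε - ‖x‖^2)/ε)) * (-(2/ε))) •
        (innerSL ℝ x)) x := by
  have h1 : HasFDerivAt (fun y : E => ‖y‖^2) ((2:ℝ) • innerSL ℝ x) x := by
    have := (hasStrictFDerivAt_norm_sq x).hasFDerivAt
    convert this using 1
    ext y; simp [two_smul]
  have h2 : HasFDerivAt (fun y : E => ((1-ε)^2 + ε)/ε + (-(1/ε)) * ‖y‖^2)
      (((-(1/ε)) : ℝ) • ((2:ℝ) • innerSL ℝ x)) x := (h1.const_mul _).const_add _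
  have h3 : HasFDerivAt (fun y : E => ((1-ε)^2 + ε - ‖y‖^2)/ε)
      (((-(1/ε)) : ℝ) • ((2:ℝ) • innerSL ℝ x)) x := by
    convert h2 using 2 with y
    field_simp
    ring
  have hψ : HasDerivAt Real.smoothTransition
      (deriv Real.smoothTransition (((1-ε)^2 + ε - ‖x‖^2)/ε)) (((1-ε)^2 + ε - ‖x‖^2)/ε) :=
    (((Real.smoothTransition.contDiff (n := 1)).differentiable (by norm_num)) _).hasDerivAt
  have := hψ.comp_hasFDerivAt x h3
  refine this.congr_fderiv ?_
  rw [smul_smul, smul_smul]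
  congr 1
  ring

lemma cut_fderiv_bound {C : ℝ} (hC : ∀ t : ℝ, |deriv Real.smoothTransition t| ≤ C)
    {ε : ℝ} (hε : 0 < ε) (x : E) :
    ‖fderiv ℝ (cut ε) x‖ ≤ 2*C/ε * ‖x‖ := by
  rw [(cut_hasFDerivAt hε x).fderiv]
  have hC0 : 0 ≤ C := le_trans (abs_nonneg _) (hC 0)
  rw [norm_smul, innerSL_apply_norm, Real.norm_eq_abs, abs_mul]
  have h2 : |(-(2/ε))| = 2/ε := by
    rw [abs_neg, abs_of_pos (by positivity)]
  rw [h2]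
  apply mul_le_mul_of_nonneg_right _ (norm_nonneg x)
  rw [show (2*C/ε ) = C * (2/ε) by ring]
  exact mul_le_mul_of_nonneg_right (hC _) (by positivity)

lemma cut_fderiv_zero {ε : ℝ} (hε : 0 < ε) {x : E} (hx : ‖x‖ < 1 - ε) :
    fderiv ℝ (cut ε) x = 0 := by
  have hev : cut ε =ᶠ[nhds x] (fun _ => (1:ℝ)) := by
    filter_upwards [Metric.ball_mem_nhds x (show (0:ℝ) < 1 - ε - ‖x‖ by linarith)] with y hy
    apply cut_one hε
    rw [mem_ball, dist_eq_norm] at hy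
    linarith [norm_sub_norm_le y x]
  rw [hev.fderiv_eq, fderiv_fun_const]
  rfl

end Aux

set_option maxHeartbeats 1000000 in
theorem stmt2 (N : ℕ) (hN : 1 ≤ N)
    (u φ : EuclideanSpace ℝ (Fin N) → ℝ)
    (hu_cont : ContinuousOn u (closedBall 0 1))
    (hu_diff : ContDiffOn ℝ 1 u (ball 0 1))
    (hu_bd : ∀ x ∈ sphere (0 : EuclideanSpace ℝ (Fin N)) 1, u x = 0)
    (hu_grad : IntegrableOn (fun x => ‖fderiv ℝ u x‖) (ball 0 1))
    (hφ : ContDiffOn ℝ 1 φ (closedBall 0 1)) (j : Fin N) :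
    ∫ x in ball (0 : EuclideanSpace ℝ (Fin N)) 1,
        fderiv ℝ u x (EuclideanSpace.single j 1) * φ x
      = - ∫ x in ball (0 : EuclideanSpace ℝ (Fin N)) 1,
          u x * fderiv ℝ φ x (EuclideanSpace.single j 1) := by
  set v : EuclideanSpace ℝ (Fin N) := EuclideanSpace.single j 1 with hvdef
  set A : EuclideanSpace ℝ (Fin N) → ℝ := fun x => fderiv ℝ u x v * φ x with hAdef
  set Bf : EuclideanSpace ℝ (Fin N) → ℝ := fun x => u x * fderiv ℝ φ x v with hBdef
  have hv1 : ‖v‖ = 1 := by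
    simp [hvdef, EuclideanSpace.norm_single]
  obtain ⟨C, hC0, hC⟩ := psi_deriv_bound
  -- bounds for φ and u on the closed ball
  obtain ⟨Mφ0, hMφ0⟩ := (isCompact_closedBall (0 : EuclideanSpace ℝ (Fin N)) 1
    ).exists_bound_of_continuousOn hφ.continuousOn
  set Mφ : ℝ := max Mφ0 0 with hMφdef
  have hMφ : ∀ x ∈ closedBall (0 : EuclideanSpace ℝ (Fin N)) 1, |φ x| ≤ Mφ :=
    fun x hx => le_trans (by simpa using hMφ0 x hx) (le_max_left _ _)
  have hMφnn : 0 ≤ Mφ := le_max_right _ _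
  obtain ⟨Mu0, hMu0⟩ := (isCompact_closedBall (0 : EuclideanSpace ℝ (Fin N)) 1
    ).exists_bound_of_continuousOn hu_cont
  set Mu : ℝ := max Mu0 0 with hMudef
  have hMu : ∀ x ∈ closedBall (0 : EuclideanSpace ℝ (Fin N)) 1, |u x| ≤ Mu :=
    fun x hx => le_trans (by simpa using hMu0 x hx) (le_max_left _ _)
  have hMunn : 0 ≤ Mu := le_max_right _ _
  -- differentiability inside the ball
  have hudiff : ∀ x ∈ ball (0 : EuclideanSpace ℝ (Fin N)) 1, DifferentiableAt ℝ u x := by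
    intro x hx
    exact (hu_diff.differentiableOn one_ne_zero).differentiableAt (isOpen_ball.mem_nhds hx)
  have hcb_nhds : ∀ x ∈ ball (0 : EuclideanSpace ℝ (Fin N)) 1,
      closedBall (0 : EuclideanSpace ℝ (Fin N)) 1 ∈ nhds x := by
    intro x hx
    exact Filter.mem_of_superset (isOpen_ball.mem_nhds hx) ball_subset_closedBall
  have hφdiff : ∀ x ∈ ball (0 : EuclideanSpace ℝ (Fin N)) 1, DifferentiableAt ℝ φ x := by
    intro x hx
    exact (hφ.differentiableOn one_ne_zero).differentiableAt (hcb_nhds x hx)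
  -- bound for the derivative of φ on the open ball
  have hφfb : ∃ M1 : ℝ, 0 ≤ M1 ∧
      ∀ x ∈ ball (0 : EuclideanSpace ℝ (Fin N)) 1, ‖fderiv ℝ φ x‖ ≤ M1 := by
    have hud : UniqueDiffOn ℝ (closedBall (0 : EuclideanSpace ℝ (Fin N)) 1) := by
      apply uniqueDiffOn_convex (convex_closedBall _ _)
      rw [interior_closedBall (0 : EuclideanSpace ℝ (Fin N)) one_ne_zero]
      exact ⟨0, mem_ball_self one_pos⟩
    have hcont : ContinuousOn (fderivWithin ℝ φ (closedBall (0 : EuclideanSpace ℝ (Fin N)) 1))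
        (closedBall (0 : EuclideanSpace ℝ (Fin N)) 1) :=
      hφ.continuousOn_fderivWithin hud le_rfl
    obtain ⟨M1, hM1⟩ := (isCompact_closedBall (0 : EuclideanSpace ℝ (Fin N)) 1
      ).exists_bound_of_continuousOn hcont
    refine ⟨max M1 0, le_max_right _ _, fun x hx => ?_⟩
    have heq : fderivWithin ℝ φ (closedBall (0 : EuclideanSpace ℝ (Fin N)) 1) x = fderiv ℝ φ x :=
      fderivWithin_of_mem_nhds (hcb_nhds x hx)
    rw [← heq]
    exact le_trans (hM1 x (ball_subset_closedBall hx)) (le_max_left _ _)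
  obtain ⟨M1, hM1nn, hM1⟩ := hφfb
  -- continuity of pieces on the ball
  have hfuc : ContinuousOn (fun x => fderiv ℝ u x) (ball (0 : EuclideanSpace ℝ (Fin N)) 1) :=
    hu_diff.continuousOn_fderiv_of_isOpen isOpen_ball le_rfl
  have hφc : ContinuousOn φ (ball (0 : EuclideanSpace ℝ (Fin N)) 1) :=
    hφ.continuousOn.mono ball_subset_closedBall
  have huc : ContinuousOn u (ball (0 : EuclideanSpace ℝ (Fin N)) 1) :=
    hu_cont.mono ball_subset_closedBall
  have hfφc : ContinuousOn (fun x => fderiv ℝ φ x) (ball (0 : EuclideanSpace ℝ (Fin N)) 1) :=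
    (hφ.mono ball_subset_closedBall).continuousOn_fderiv_of_isOpen isOpen_ball le_rfl
  -- integrability of A and Bf
  have hAc : ContinuousOn A (ball (0 : EuclideanSpace ℝ (Fin N)) 1) :=
    ((hfuc.clm_apply continuousOn_const).mul hφc)
  have hBc : ContinuousOn Bf (ball (0 : EuclideanSpace ℝ (Fin N)) 1) :=
    (huc.mul (hfφc.clm_apply continuousOn_const))
  have hA : IntegrableOn A (ball (0 : EuclideanSpace ℝ (Fin N)) 1) := by
    apply Integrable.mono' (hu_grad.mul_const Mφ)
      (hAc.aestronglyMeasurable measurableSet_ball)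
    rw [ae_restrict_iff' measurableSet_ball]
    apply ae_of_all
    intro x hx
    have h1 : ‖fderiv ℝ u x v‖ ≤ ‖fderiv ℝ u x‖ := by
      calc ‖fderiv ℝ u x v‖ ≤ ‖fderiv ℝ u x‖ * ‖v‖ := (fderiv ℝ u x).le_opNorm v
        _ = ‖fderiv ℝ u x‖ := by rw [hv1, mul_one]
    calc ‖A x‖ = ‖fderiv ℝ u x v‖ * |φ x| := by rw [hAdef]; simp [abs_mul]
      _ ≤ ‖fderiv ℝ u x‖ * Mφ := by
          apply mul_le_mul h1 (hMφ x (ball_subset_closedBall hx)) (abs_nonneg _) (norm_nonneg _)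
  have hB : IntegrableOn Bf (ball (0 : EuclideanSpace ℝ (Fin N)) 1) := by
    apply Integrable.mono' (integrableOn_const (C := Mu * M1) measure_ball_lt_top.ne)
      (hBc.aestronglyMeasurable measurableSet_ball)
    rw [ae_restrict_iff' measurableSet_ball]
    apply ae_of_all
    intro x hx
    have h1 : ‖fderiv ℝ φ x v‖ ≤ M1 := by
      calc ‖fderiv ℝ φ x v‖ ≤ ‖fderiv ℝ φ x‖ * ‖v‖ := (fderiv ℝ φ x).le_opNorm v
        _ = ‖fderiv ℝ φ x‖ := by rw [hv1, mul_one]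
        _ ≤ M1 := hM1 x hx
    calc ‖Bf x‖ = |u x| * ‖fderiv ℝ φ x v‖ := by rw [hBdef]; simp [abs_mul]
      _ ≤ Mu * M1 := mul_le_mul (hMu x (ball_subset_closedBall hx)) h1 (norm_nonneg _) hMunn
  have hχvG : ∀ ε : ℝ, 0 < ε → ∀ x : EuclideanSpace ℝ (Fin N), ‖x‖ ≤ 1 →
      ‖fderiv ℝ (cut ε) x v‖ ≤ 2*C/ε := by
    intro ε hε x hx
    calc ‖fderiv ℝ (cut ε) x v‖ ≤ ‖fderiv ℝ (cut ε) x‖ * ‖v‖ := (fderiv ℝ (cut ε) x).le_opNorm v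
      _ = ‖fderiv ℝ (cut ε) x‖ := by rw [hv1, mul_one]
      _ ≤ 2*C/ε * ‖x‖ := cut_fderiv_bound hC hε x
      _ ≤ 2*C/ε := by
          apply mul_le_of_le_one_right (by positivity) hx
  have hCintG : ∀ ε : ℝ, 0 < ε → IntegrableOn
      (fun x => u x * φ x * (fderiv ℝ (cut ε) x v))
      (ball (0:EuclideanSpace ℝ (Fin N)) 1) := by
    intro ε hε
    apply Integrable.mono'
      (integrableOn_const (C := Mu * Mφ * (2*C/ε)) measure_ball_lt_top.ne)
      (((huc.mul hφc).mul
        ((((cut_contDiff ε).continuous_fderiv one_ne_zero).clm_apply continuous_const).continuousOn)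
        ).aestronglyMeasurable measurableSet_ball)
    rw [ae_restrict_iff' measurableSet_ball]
    apply ae_of_all
    intro x hx
    have hx1 : ‖x‖ ≤ 1 := le_of_lt (mem_ball_zero_iff.1 hx)
    rw [Pi.mul_apply, Pi.mul_apply, norm_mul, norm_mul, Real.norm_eq_abs (u x), Real.norm_eq_abs (φ x)]
    apply mul_le_mul _ (hχvG ε hε x hx1) (norm_nonneg _) (by positivity)
    exact mul_le_mul (hMu x (ball_subset_closedBall hx)) (hMφ x (ball_subset_closedBall hx))
      (abs_nonneg _) hMunn
  -- the key identity for fixed ε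
  have key : ∀ ε : ℝ, 0 < ε → ε < 1 →
      (∫ x in ball (0 : EuclideanSpace ℝ (Fin N)) 1, A x * cut ε x)
      + (∫ x in ball (0 : EuclideanSpace ℝ (Fin N)) 1, Bf x * cut ε x)
      + (∫ x in ball (0 : EuclideanSpace ℝ (Fin N)) 1,
          u x * φ x * (fderiv ℝ (cut ε) x v)) = 0 := by
    intro ε hε hε1
    set χ : EuclideanSpace ℝ (Fin N) → ℝ := cut ε with hχdef
    set f : EuclideanSpace ℝ (Fin N) → ℝ := fun x => u x * φ x * χ x with hfdef
    have hχcd : ContDiff ℝ 1 χ := cut_contDiff ε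
    have hχd : ∀ x, DifferentiableAt ℝ χ x := fun x => (hχcd.differentiable one_ne_zero) x
    have hχc : Continuous χ := hχcd.continuous
    have hχb : ∀ x : EuclideanSpace ℝ (Fin N), |χ x| ≤ 1 := fun x =>
      abs_le.2 ⟨by linarith [cut_nonneg ε x], cut_le_one ε x⟩
    have hVopen : IsOpen {y : EuclideanSpace ℝ (Fin N) | (1-ε)^2 + ε < ‖y‖^2} :=
      isOpen_lt continuous_const ((continuous_norm).pow 2)
    have hev0 : ∀ x : EuclideanSpace ℝ (Fin N), 1 ≤ ‖x‖ →
        f =ᶠ[nhds x] (fun _ => (0:ℝ)) := by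
      intro x hx
      have hmem : x ∈ {y : EuclideanSpace ℝ (Fin N) | (1-ε)^2 + ε < ‖y‖^2} := by
        simp only [Set.mem_setOf_eq]
        nlinarith
      filter_upwards [hVopen.mem_nhds hmem] with y hy
      have h0 : χ y = 0 := cut_zero hε (le_of_lt hy)
      simp [hfdef, h0]
    have hfd : ∀ x, DifferentiableAt ℝ f x := by
      intro x
      rcases lt_or_ge ‖x‖ 1 with hx | hx
      · have hxb : x ∈ ball (0 : EuclideanSpace ℝ (Fin N)) 1 := mem_ball_zero_iff.2 hx
        exact ((hudiff x hxb).mul (hφdiff x hxb)).mul (hχd x)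
      · rw [(hev0 x hx).differentiableAt_iff]
        exact differentiableAt_const 0
    have hf0 : ∀ x : EuclideanSpace ℝ (Fin N), 1 ≤ ‖x‖ → fderiv ℝ f x = 0 := by
      intro x hx
      rw [(hev0 x hx).fderiv_eq]
      exact fderiv_const_apply 0
    have hexp : ∀ x ∈ ball (0 : EuclideanSpace ℝ (Fin N)) 1,
        fderiv ℝ f x v = A x * χ x + Bf x * χ x + u x * φ x * (fderiv ℝ χ x v) := by
      intro x hx
      have hu' := (hudiff x hx).hasFDerivAt
      have hφ' := (hφdiff x hx).hasFDerivAt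
      have hχ' := (hχd x).hasFDerivAt
      have hf' := (hu'.mul hφ').mul hχ'
      rw [show f = u * φ * χ from rfl, hf'.fderiv]
      simp only [Pi.mul_apply, ContinuousLinearMap.add_apply, ContinuousLinearMap.smul_apply, smul_eq_mul,
        hAdef, hBdef]
      ring
    have hAχ : IntegrableOn (fun x => A x * χ x) (ball (0:EuclideanSpace ℝ (Fin N)) 1) := by
      apply Integrable.mono' hA.norm
        ((hAc.mul hχc.continuousOn).aestronglyMeasurable measurableSet_ball)
      apply ae_of_all
      intro x
      rw [Pi.mul_apply, norm_mul, Real.norm_eq_abs (χ x)]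
      exact mul_le_of_le_one_right (norm_nonneg _) (hχb x)
    have hBχ : IntegrableOn (fun x => Bf x * χ x) (ball (0:EuclideanSpace ℝ (Fin N)) 1) := by
      apply Integrable.mono' hB.norm
        ((hBc.mul hχc.continuousOn).aestronglyMeasurable measurableSet_ball)
      apply ae_of_all
      intro x
      rw [Pi.mul_apply, norm_mul, Real.norm_eq_abs (χ x)]
      exact mul_le_of_le_one_right (norm_nonneg _) (hχb x)
    have hCχ : IntegrableOn (fun x => u x * φ x * (fderiv ℝ χ x v))
        (ball (0:EuclideanSpace ℝ (Fin N)) 1) := hCintG ε hε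
    have hsum_int : IntegrableOn (fun x => fderiv ℝ f x v)
        (ball (0:EuclideanSpace ℝ (Fin N)) 1) :=
      IntegrableOn.congr_fun ((hAχ.add hBχ).add hCχ) (fun x hx => (hexp x hx).symm)
        measurableSet_ball
    have hint : Integrable (fun x => fderiv ℝ f x v) := by
      rw [← integrableOn_univ, ← Set.union_compl_self (ball (0:EuclideanSpace ℝ (Fin N)) 1)]
      apply hsum_int.union
      apply IntegrableOn.congr_fun (integrableOn_zero) _ measurableSet_ball.compl
      intro x hx
      rw [Set.mem_compl_iff, mem_ball_zero_iff, not_lt] at hx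
      simp [hf0 x hx]
    have hfcont : Continuous f := by
      rw [continuous_iff_continuousAt]; exact fun x => (hfd x).continuousAt
    have hfsupp : HasCompactSupport f := by
      apply HasCompactSupport.intro (isCompact_closedBall (0:EuclideanSpace ℝ (Fin N)) 1)
      intro x hx
      rw [mem_closedBall, dist_zero_right, not_le] at hx
      have h0 : χ x = 0 := cut_zero hε (by nlinarith)
      simp [hfdef, h0]
    have hfint : Integrable f := hfcont.integrable_of_hasCompactSupport hfsupp
    have hzero : (∫ x, fderiv ℝ f x v) = 0 := by
      have harg2 : (fun x : EuclideanSpace ℝ (Fin N) =>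
          f x * fderiv ℝ (fun _ => (1:ℝ)) x v) = fun _ => (0:ℝ) := by
        funext x; simp
      have h := integral_mul_fderiv_eq_neg_fderiv_mul_of_integrable
        (f := f) (g := fun _ => (1:ℝ)) (v := v) (μ := volume)
        (by simpa using hint) (by rw [harg2]; exact integrable_zero _ _ _)
        (by simpa using hfint) (fun x _ => hfd x) (fun x _ => differentiable_const (1:ℝ) x)
      rw [harg2] at h
      simp only [integral_zero] at h
      have h' : (∫ x, fderiv ℝ f x v * 1) = 0 := by linarith
      simpa using h'
    have hcompl : (∫ x in (ball (0:EuclideanSpace ℝ (Fin N)) 1)ᶜ, fderiv ℝ f x v) = 0 := by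
      apply setIntegral_eq_zero_of_forall_eq_zero
      intro x hx
      rw [Set.mem_compl_iff, mem_ball_zero_iff, not_lt] at hx
      simp [hf0 x hx]
    have hres : (∫ x in ball (0:EuclideanSpace ℝ (Fin N)) 1, fderiv ℝ f x v) = 0 := by
      have hsplit := integral_add_compl
        (s := ball (0:EuclideanSpace ℝ (Fin N)) 1) measurableSet_ball hint
      rw [hcompl] at hsplit
      rw [hzero] at hsplit
      linarith
    have h1 : (∫ x in ball (0:EuclideanSpace ℝ (Fin N)) 1,
        (A x * χ x + Bf x * χ x + u x * φ x * (fderiv ℝ χ x v)))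
        = (∫ x in ball (0:EuclideanSpace ℝ (Fin N)) 1, A x * χ x)
        + (∫ x in ball (0:EuclideanSpace ℝ (Fin N)) 1, Bf x * χ x)
        + (∫ x in ball (0:EuclideanSpace ℝ (Fin N)) 1, u x * φ x * (fderiv ℝ χ x v)) := by
      have h1a : (∫ x in ball (0:EuclideanSpace ℝ (Fin N)) 1,
          (A x * χ x + Bf x * χ x) + u x * φ x * (fderiv ℝ χ x v))
          = (∫ x in ball (0:EuclideanSpace ℝ (Fin N)) 1, (A x * χ x + Bf x * χ x))
          + (∫ x in ball (0:EuclideanSpace ℝ (Fin N)) 1, u x * φ x * (fderiv ℝ χ x v)) :=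
        integral_add (hAχ.add hBχ) hCχ
      have h1b : (∫ x in ball (0:EuclideanSpace ℝ (Fin N)) 1, (A x * χ x + Bf x * χ x))
          = (∫ x in ball (0:EuclideanSpace ℝ (Fin N)) 1, A x * χ x)
          + (∫ x in ball (0:EuclideanSpace ℝ (Fin N)) 1, Bf x * χ x) :=
        integral_add hAχ hBχ
      rw [h1a, h1b]
    have h2 : (∫ x in ball (0:EuclideanSpace ℝ (Fin N)) 1,
        (A x * χ x + Bf x * χ x + u x * φ x * (fderiv ℝ χ x v)))
        = (∫ x in ball (0:EuclideanSpace ℝ (Fin N)) 1, fderiv ℝ f x v) :=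
      setIntegral_congr_fun measurableSet_ball (fun x hx => (hexp x hx).symm)
    rw [← h1, h2, hres]

  -- smallness of u near the boundary
  have husmall : ∀ δ : ℝ, 0 < δ → ∃ r : ℝ, r < 1 ∧
      ∀ x : EuclideanSpace ℝ (Fin N), r ≤ ‖x‖ → ‖x‖ ≤ 1 → |u x| ≤ δ := by
    intro δ hδ
    set K : Set (EuclideanSpace ℝ (Fin N)) :=
      closedBall (0:EuclideanSpace ℝ (Fin N)) 1 ∩ (fun x => |u x|) ⁻¹' (Set.Ici δ) with hKdef
    have hKclosed : IsClosed K :=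
      hu_cont.abs.preimage_isClosed_of_isClosed Metric.isClosed_closedBall isClosed_Ici
    have hKcomp : IsCompact K :=
      (isCompact_closedBall _ _).of_isClosed_subset hKclosed Set.inter_subset_left
    rcases K.eq_empty_or_nonempty with hKe | hKne
    · refine ⟨1/2, by norm_num, fun x hr hx1 => ?_⟩
      by_contra hcon
      push_neg at hcon
      have hmem : x ∈ K := ⟨mem_closedBall_zero_iff.2 hx1, le_of_lt hcon⟩
      rw [hKe] at hmem
      exact hmem
    · obtain ⟨x0, hx0K, hmax⟩ := hKcomp.exists_isMaxOn hKne continuous_norm.continuousOn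
      have hx0ball : ‖x0‖ < 1 := by
        have h1 : ‖x0‖ ≤ 1 := mem_closedBall_zero_iff.1 hx0K.1
        rcases lt_or_eq_of_le h1 with h | h
        · exact h
        · exfalso
          have hsx : x0 ∈ sphere (0:EuclideanSpace ℝ (Fin N)) 1 := by
            rw [mem_sphere_zero_iff_norm]; exact h
          have := hx0K.2
          rw [Set.mem_preimage, Set.mem_Ici, hu_bd x0 hsx] at this
          simp at this
          linarith
      refine ⟨(1+‖x0‖)/2, by linarith, fun x hr hx1 => ?_⟩
      by_contra hcon
      push_neg at hcon
      have hxK : x ∈ K := ⟨mem_closedBall_zero_iff.2 hx1, le_of_lt hcon⟩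
      have hle : ‖x‖ ≤ ‖x0‖ := hmax hxK
      linarith
  -- volume of annuli
  set volB : ℝ := (volume (ball (0:EuclideanSpace ℝ (Fin N)) 1)).toReal with hvolBdef
  have hvolBnn : 0 ≤ volB := ENNReal.toReal_nonneg
  have hannulus : ∀ ε : ℝ, 0 < ε → ε < 1 →
      (volume (ball (0:EuclideanSpace ℝ (Fin N)) 1 \
        ball (0:EuclideanSpace ℝ (Fin N)) (1-ε))).toReal ≤ N * ε * volB := by
    intro ε hε hε1
    have hsub : ball (0:EuclideanSpace ℝ (Fin N)) (1-ε) ⊆ ball (0:EuclideanSpace ℝ (Fin N)) 1 :=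
      ball_subset_ball (by linarith)
    have hne : volume (ball (0:EuclideanSpace ℝ (Fin N)) 1) ≠ ⊤ := measure_ball_lt_top.ne
    have hdiff : volume (ball (0:EuclideanSpace ℝ (Fin N)) 1 \
        ball (0:EuclideanSpace ℝ (Fin N)) (1-ε))
        = volume (ball (0:EuclideanSpace ℝ (Fin N)) 1)
          - volume (ball (0:EuclideanSpace ℝ (Fin N)) (1-ε)) :=
      measure_diff hsub measurableSet_ball.nullMeasurableSet measure_ball_lt_top.ne
    have hball : volume (ball (0:EuclideanSpace ℝ (Fin N)) (1-ε))
        = ENNReal.ofReal ((1-ε)^N) * volume (ball (0:EuclideanSpace ℝ (Fin N)) 1) := by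
      rw [MeasureTheory.Measure.addHaar_ball_of_pos volume (0:EuclideanSpace ℝ (Fin N))
        (show 0 < 1-ε by linarith), finrank_euclideanSpace_fin]
    have hle : ENNReal.ofReal ((1-ε)^N) * volume (ball (0:EuclideanSpace ℝ (Fin N)) 1)
        ≤ volume (ball (0:EuclideanSpace ℝ (Fin N)) 1) := by
      calc ENNReal.ofReal ((1-ε)^N) * volume (ball (0:EuclideanSpace ℝ (Fin N)) 1)
          ≤ 1 * volume (ball (0:EuclideanSpace ℝ (Fin N)) 1) :=
            mul_le_mul_left
              (ENNReal.ofReal_le_one.2 (pow_le_one₀ (by linarith) (by linarith))) _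
        _ = volume (ball (0:EuclideanSpace ℝ (Fin N)) 1) := one_mul _
    rw [hdiff, hball, ENNReal.toReal_sub_of_le hle hne, ENNReal.toReal_mul,
      ENNReal.toReal_ofReal (pow_nonneg (by linarith) N)]
    have hb : 1 + (N:ℝ)*(-ε) ≤ (1-ε)^N := by
      have := one_add_mul_le_pow (show (-2:ℝ) ≤ -ε by linarith) N
      have h2 : (1 + -ε) = 1 - ε := by ring
      rw [h2] at this
      exact this
    nlinarith [hvolBnn]
  -- the sequence of cutoff parameters
  set e : ℕ → ℝ := fun n => 1/((n:ℝ)+2) with hedef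
  have hepos : ∀ n, 0 < e n := fun n => by
    simp only [hedef]
    positivity
  have helt1 : ∀ n, e n < 1 := by
    intro n
    rw [hedef]
    rw [div_lt_one (by positivity)]
    have : (0:ℝ) ≤ n := Nat.cast_nonneg n
    linarith
  have hetend : Tendsto e atTop (𝓝 0) := by
    have h1 : Tendsto (fun n:ℕ => ((n:ℝ)+2)) atTop atTop :=
      tendsto_atTop_add_const_right atTop 2 tendsto_natCast_atTop_atTop
    have := h1.inv_tendsto_atTop
    simpa [hedef, one_div, Pi.inv_def] using this
  -- convergence of the first two terms
  have hconv : ∀ (G : EuclideanSpace ℝ (Fin N) → ℝ),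
      IntegrableOn G (ball (0:EuclideanSpace ℝ (Fin N)) 1) →
      ContinuousOn G (ball (0:EuclideanSpace ℝ (Fin N)) 1) →
      Tendsto (fun n => ∫ x in ball (0:EuclideanSpace ℝ (Fin N)) 1, G x * cut (e n) x) atTop
        (𝓝 (∫ x in ball (0:EuclideanSpace ℝ (Fin N)) 1, G x)) := by
    intro G hGint hGc
    apply tendsto_integral_of_dominated_convergence (bound := fun x => ‖G x‖)
    · intro n
      exact (hGc.mul (cut_contDiff (e n)).continuous.continuousOn).aestronglyMeasurable
        measurableSet_ball
    · exact hGint.norm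
    · intro n
      apply ae_of_all
      intro x
      rw [norm_mul, Real.norm_eq_abs (cut (e n) x)]
      exact mul_le_of_le_one_right (norm_nonneg _)
        (abs_le.2 ⟨by linarith [cut_nonneg (e n) x], cut_le_one (e n) x⟩)
    · rw [ae_restrict_iff' measurableSet_ball]
      apply ae_of_all
      intro x hx
      have hx1 : ‖x‖ < 1 := mem_ball_zero_iff.1 hx
      have hevn : ∀ᶠ n in atTop, G x * cut (e n) x = G x := by
        filter_upwards [hetend.eventually_lt_const (show (0:ℝ) < 1 - ‖x‖ by linarith)] with n hn
        rw [cut_one (hepos n) (by linarith), mul_one]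
      exact Tendsto.congr' (hevn.mono fun n h => h.symm) tendsto_const_nhds
  have hT1 := hconv A hA hAc
  have hT2 := hconv Bf hB hBc
  -- convergence of the boundary term to zero
  have hT3 : Tendsto (fun n => ∫ x in ball (0:EuclideanSpace ℝ (Fin N)) 1,
      u x * φ x * (fderiv ℝ (cut (e n)) x v)) atTop (𝓝 0) := by
    rw [NormedAddCommGroup.tendsto_nhds_zero]
    intro ρ hρ
    set K : ℝ := Mφ * (2*C) * N * volB + 1 with hKdef
    have hKpos : 0 < K := by positivity
    set δ : ℝ := ρ / (2*K) with hδdef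
    have hδpos : 0 < δ := by positivity
    obtain ⟨r, hr1, hr⟩ := husmall δ hδpos
    have h1r : 0 < 1 - r := by linarith
    filter_upwards [hetend.eventually_lt_const h1r] with n hn
    set ε : ℝ := e n with hεdef
    have hε : 0 < ε := hepos n
    have hε1 : ε < 1 := helt1 n
    have hsub : ball (0:EuclideanSpace ℝ (Fin N)) (1-ε) ⊆ ball (0:EuclideanSpace ℝ (Fin N)) 1 :=
      ball_subset_ball (by linarith)
    have hCn : IntegrableOn (fun x => u x * φ x * (fderiv ℝ (cut ε) x v))
        (ball (0:EuclideanSpace ℝ (Fin N)) 1) := hCintG ε hε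
    have hsplit : (∫ x in ball (0:EuclideanSpace ℝ (Fin N)) 1,
        u x * φ x * (fderiv ℝ (cut ε) x v))
        = (∫ x in ball (0:EuclideanSpace ℝ (Fin N)) (1-ε),
            u x * φ x * (fderiv ℝ (cut ε) x v))
        + (∫ x in ball (0:EuclideanSpace ℝ (Fin N)) 1 \
            ball (0:EuclideanSpace ℝ (Fin N)) (1-ε),
            u x * φ x * (fderiv ℝ (cut ε) x v)) := by
      rw [← setIntegral_union Set.disjoint_sdiff_right
        (measurableSet_ball.diff measurableSet_ball)
        (hCn.mono_set hsub) (hCn.mono_set Set.diff_subset), Set.union_diff_cancel hsub]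
    have hzero1 : (∫ x in ball (0:EuclideanSpace ℝ (Fin N)) (1-ε),
        u x * φ x * (fderiv ℝ (cut ε) x v)) = 0 := by
      apply setIntegral_eq_zero_of_forall_eq_zero
      intro x hx
      rw [cut_fderiv_zero hε (mem_ball_zero_iff.1 hx)]
      simp
    have hnorm : ‖∫ x in ball (0:EuclideanSpace ℝ (Fin N)) 1 \
        ball (0:EuclideanSpace ℝ (Fin N)) (1-ε), u x * φ x * (fderiv ℝ (cut ε) x v)‖ ≤
        (δ * Mφ * (2*C/ε)) * (volume (ball (0:EuclideanSpace ℝ (Fin N)) 1 \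
          ball (0:EuclideanSpace ℝ (Fin N)) (1-ε))).toReal := by
      apply norm_setIntegral_le_of_norm_le_const
      · exact lt_of_le_of_lt (measure_mono Set.diff_subset) measure_ball_lt_top
      · intro x hx
        obtain ⟨hx1, hx2⟩ := hx
        have hxn1 : ‖x‖ < 1 := mem_ball_zero_iff.1 hx1
        have hxn2 : 1 - ε ≤ ‖x‖ := by
          by_contra hcc
          push_neg at hcc
          exact hx2 (mem_ball_zero_iff.2 hcc)
        have hu_x : |u x| ≤ δ := hr x (by linarith) hxn1.le
        rw [norm_mul, norm_mul, Real.norm_eq_abs (u x), Real.norm_eq_abs (φ x)]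
        apply mul_le_mul _ (hχvG ε hε x hxn1.le) (norm_nonneg _) (by positivity)
        exact mul_le_mul hu_x (hMφ x (ball_subset_closedBall hx1)) (abs_nonneg _) hδpos.le
    rw [hsplit, hzero1, zero_add]
    calc ‖∫ x in ball (0:EuclideanSpace ℝ (Fin N)) 1 \
        ball (0:EuclideanSpace ℝ (Fin N)) (1-ε), u x * φ x * (fderiv ℝ (cut ε) x v)‖
        ≤ (δ * Mφ * (2*C/ε)) * (volume (ball (0:EuclideanSpace ℝ (Fin N)) 1 \
          ball (0:EuclideanSpace ℝ (Fin N)) (1-ε))).toReal := hnorm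
      _ ≤ (δ * Mφ * (2*C/ε)) * (N * ε * volB) := by
          apply mul_le_mul_of_nonneg_left (hannulus ε hε hε1) (by positivity)
      _ = δ * (Mφ * (2*C) * N * volB) := by
          field_simp
      _ ≤ δ * (K - 1) := by
          apply mul_le_mul_of_nonneg_left (le_of_eq (by rw [hKdef]; ring)) hδpos.le
      _ < ρ := by
          rw [hδdef]
          rw [div_mul_eq_mul_div, div_lt_iff₀ (by positivity)]
          nlinarith
  -- conclusion
  have hks : ∀ n : ℕ,
      (∫ x in ball (0:EuclideanSpace ℝ (Fin N)) 1, A x * cut (e n) x)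
      + (∫ x in ball (0:EuclideanSpace ℝ (Fin N)) 1, Bf x * cut (e n) x)
      + (∫ x in ball (0:EuclideanSpace ℝ (Fin N)) 1,
          u x * φ x * (fderiv ℝ (cut (e n)) x v)) = 0 :=
    fun n => key (e n) (hepos n) (helt1 n)
  have hsum := (hT1.add hT2).add hT3
  have hzseq : Tendsto (fun n =>
      (∫ x in ball (0:EuclideanSpace ℝ (Fin N)) 1, A x * cut (e n) x)
      + (∫ x in ball (0:EuclideanSpace ℝ (Fin N)) 1, Bf x * cut (e n) x)
      + (∫ x in ball (0:EuclideanSpace ℝ (Fin N)) 1,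
          u x * φ x * (fderiv ℝ (cut (e n)) x v))) atTop (𝓝 0) := by
    have hfeq : (fun n : ℕ =>
        (∫ x in ball (0:EuclideanSpace ℝ (Fin N)) 1, A x * cut (e n) x)
        + (∫ x in ball (0:EuclideanSpace ℝ (Fin N)) 1, Bf x * cut (e n) x)
        + (∫ x in ball (0:EuclideanSpace ℝ (Fin N)) 1,
            u x * φ x * (fderiv ℝ (cut (e n)) x v))) = fun _ => (0:ℝ) := funext hks
    rw [hfeq]
    exact tendsto_const_nhds
  have hfin := tendsto_nhds_unique hsum hzseq
  rw [add_zero] at hfin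
  linarith
end

section
/- Let s ∈ (0,1), Ω' ⊂⊂ Ω'' ⊂⊂ Ω ⊂ ℝ^N open and bounded, v : ℝ^N → ℝ measurable with finite Gagliardo seminorm [v]_{s,Ω''} and finite weighted norm ‖v‖_{L^1_s} := ∫_{ℝ^N} |v(x)|/(1+|x|^{N+2s}) dx and v ∈ L^2(Ω'), and φ : ℝ^N → ℝ measurable with supp φ ⊂ Ω' and [φ]_{s,Ω''} < ∞, φ ∈ L^2(Ω'). Then there exist constants c_1, c_2 > 0 depending only on Ω', Ω'', N, s such that (1/2)∫∫_{ℝ^N×ℝ^N} |v(x)−v(y)||φ(x)−φ(y)|/|x−y|^{N+2s} dx dy ≤ [v]_{s,Ω''}[φ]_{s,Ω''} + c_1 ‖v‖_{L^2(Ω')}‖φ‖_{L^2(Ω')} + c_2 ‖φ‖_{L^1(Ω')}‖v‖_{L^1_s}. -/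
open MeasureTheory Metric Set
open scoped ENNReal

lemma real_cs_identity (a b r : ℝ) (ha : 0 ≤ a) (hb : 0 ≤ b) (hr : 0 ≤ r) :
    a * b / r = (a^2/r)^(1/2:ℝ) * (b^2/r)^(1/2:ℝ) := by
  rw [← Real.mul_rpow (by positivity) (by positivity)]
  have h : a^2/r * (b^2/r) = (a*b/r)^2 := by ring
  rw [h, ← Real.rpow_natCast (a*b/r) 2, ← Real.rpow_mul (by positivity)]
  norm_num

lemma ofReal_cs (a b r : ℝ) (ha : 0 ≤ a) (hb : 0 ≤ b) (hr : 0 ≤ r) :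
    ENNReal.ofReal (a * b / r) =
      (ENNReal.ofReal (a^2/r)) ^ (1/2:ℝ) * (ENNReal.ofReal (b^2/r)) ^ (1/2:ℝ) := by
  rw [ENNReal.ofReal_rpow_of_nonneg (by positivity) (by norm_num),
      ENNReal.ofReal_rpow_of_nonneg (by positivity) (by norm_num),
      ← ENNReal.ofReal_mul (by positivity), real_cs_identity a b r ha hb hr]

lemma K1_translate (N : ℕ) (p δ : ℝ) (x : EuclideanSpace ℝ (Fin N)) :
    ∫⁻ y in (ball x δ)ᶜ, ENNReal.ofReal (1/‖x-y‖^p) =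
    ∫⁻ z in (ball (0:EuclideanSpace ℝ (Fin N)) δ)ᶜ, ENNReal.ofReal (1/‖z‖^p) := by
  rw [← lintegral_indicator measurableSet_ball.compl,
      ← lintegral_indicator measurableSet_ball.compl]
  have hkey : ∀ y : EuclideanSpace ℝ (Fin N),
      ((ball x δ)ᶜ).indicator (fun y => ENNReal.ofReal (1/‖x-y‖^p)) y
      = ((ball (0:EuclideanSpace ℝ (Fin N)) δ)ᶜ).indicator
          (fun z => ENNReal.ofReal (1/‖z‖^p)) (y + (-x)) := by
    classical
    intro y
    have hmem : y + (-x) ∈ (ball (0:EuclideanSpace ℝ (Fin N)) δ)ᶜ ↔ y ∈ (ball x δ)ᶜ := by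
      simp [Metric.mem_ball, dist_eq_norm, sub_eq_add_neg]
    have hval : ‖x - y‖ = ‖y + (-x)‖ := by
      rw [← sub_eq_add_neg, norm_sub_rev]
    rw [Set.indicator_apply, Set.indicator_apply, hval]
    by_cases h : y ∈ (ball x δ)ᶜ
    · rw [if_pos h, if_pos (hmem.2 h)]
    · rw [if_neg h, if_neg (fun hc => h (hmem.1 hc))]
  simp_rw [hkey]
  exact lintegral_add_right_eq_self _ (-x)

lemma K1_fin (N : ℕ) (p δ : ℝ) (hδ : 0 < δ) (hNp : (N:ℝ) < p) :
    (∫⁻ z in (ball (0:EuclideanSpace ℝ (Fin N)) δ)ᶜ, ENNReal.ofReal (1/‖z‖^p)) < ⊤ := by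
  have hp0 : (0:ℝ) < p := lt_of_le_of_lt (Nat.cast_nonneg N) hNp
  have hint : Integrable (fun z : EuclideanSpace ℝ (Fin N) => ((1:ℝ)+‖z‖)^(-p)) := by
    apply integrable_one_add_norm
    rwa [finrank_euclideanSpace_fin]
  have hfin : (∫⁻ z : EuclideanSpace ℝ (Fin N), ENNReal.ofReal (((1:ℝ)+‖z‖)^(-p))) < ⊤ := by
    refine lt_of_le_of_lt (lintegral_mono fun z => ?_) hint.hasFiniteIntegral
    exact Real.ofReal_le_enorm _
  calc (∫⁻ z in (ball (0:EuclideanSpace ℝ (Fin N)) δ)ᶜ, ENNReal.ofReal (1/‖z‖^p))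
      ≤ ∫⁻ z in (ball (0:EuclideanSpace ℝ (Fin N)) δ)ᶜ,
          ENNReal.ofReal ((1+1/δ)^p * ((1:ℝ)+‖z‖)^(-p)) := by
        refine setLIntegral_mono (by fun_prop) fun z hz => ?_
        refine ENNReal.ofReal_le_ofReal ?_
        have hz' : δ ≤ ‖z‖ := by
          simpa [Metric.mem_ball, dist_eq_norm] using hz
        have hz0 : 0 < ‖z‖ := lt_of_lt_of_le hδ hz'
        have h1z : 1 + ‖z‖ ≤ (1+1/δ) * ‖z‖ := by
          have h3 : 1 ≤ ‖z‖/δ := (one_le_div hδ).2 hz'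
          have h2 : (1+1/δ) * ‖z‖ = ‖z‖ + ‖z‖/δ := by field_simp
          rw [h2]; linarith
        have hpow : (1 + ‖z‖)^p ≤ (1+1/δ)^p * ‖z‖^p := by
          rw [← Real.mul_rpow (by positivity) (by positivity)]
          exact Real.rpow_le_rpow (by positivity) h1z hp0.le
        rw [Real.rpow_neg (by positivity), ← one_div, mul_one_div,
          div_le_div_iff₀ (by positivity) (by positivity)]
        nlinarith [Real.rpow_nonneg (norm_nonneg z) p]
      _ = ENNReal.ofReal ((1+1/δ)^p) *
            ∫⁻ z in (ball (0:EuclideanSpace ℝ (Fin N)) δ)ᶜ,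
              ENNReal.ofReal (((1:ℝ)+‖z‖)^(-p)) := by
        simp_rw [ENNReal.ofReal_mul (by positivity : (0:ℝ) ≤ (1+1/δ)^p)]
        exact lintegral_const_mul'' _ (by fun_prop)
      _ < ⊤ := ENNReal.mul_lt_top ENNReal.ofReal_lt_top
          (lt_of_le_of_lt (lintegral_mono' Measure.restrict_le_self le_rfl) hfin)

/-- Gagliardo seminorm (squared) of `w` over `U`. -/
noncomputable def gagliardoSq (N : ℕ) (s : ℝ) (w : EuclideanSpace ℝ (Fin N) → ℝ)
    (U : Set (EuclideanSpace ℝ (Fin N))) : ℝ≥0∞ :=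
  (1/2 : ℝ≥0∞) * ∫⁻ x in U, ∫⁻ y in U,
    ENNReal.ofReal (|w x - w y| ^ 2 / ‖x - y‖ ^ ((N:ℝ) + 2*s))

set_option maxHeartbeats 2000000 in
theorem stmt3 (N : ℕ) (hN : 1 ≤ N) (s : ℝ) (hs : s ∈ Set.Ioo (0:ℝ) 1)
    (Ω' Ω'' Ω : Set (EuclideanSpace ℝ (Fin N)))
    (hΩ'o : IsOpen Ω') (hΩ''o : IsOpen Ω'') (hΩo : IsOpen Ω)
    (hΩb : Bornology.IsBounded Ω)
    (h1 : closure Ω' ⊆ Ω'') (h2 : closure Ω'' ⊆ Ω) :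
    ∃ c₁ c₂ : ℝ≥0∞, 0 < c₁ ∧ c₁ < ⊤ ∧ 0 < c₂ ∧ c₂ < ⊤ ∧
      ∀ v φ : EuclideanSpace ℝ (Fin N) → ℝ, Measurable v → Measurable φ →
        gagliardoSq N s v Ω'' < ⊤ →
        (∫⁻ x, ENNReal.ofReal (|v x| / (1 + ‖x‖ ^ ((N:ℝ) + 2*s)))) < ⊤ →
        MemLp v 2 (volume.restrict Ω') →
        tsupport φ ⊆ Ω' →
        gagliardoSq N s φ Ω'' < ⊤ →
        MemLp φ 2 (volume.restrict Ω') →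
        (1/2 : ℝ≥0∞) * (∫⁻ x, ∫⁻ y,
            ENNReal.ofReal (|v x - v y| * |φ x - φ y| / ‖x - y‖ ^ ((N:ℝ) + 2*s)))
          ≤ (gagliardoSq N s v Ω'') ^ (1/2 : ℝ) * (gagliardoSq N s φ Ω'') ^ (1/2 : ℝ)
            + c₁ * (∫⁻ x in Ω', ENNReal.ofReal (|v x| ^ 2)) ^ (1/2 : ℝ)
                 * (∫⁻ x in Ω', ENNReal.ofReal (|φ x| ^ 2)) ^ (1/2 : ℝ)
            + c₂ * (∫⁻ x in Ω', ENNReal.ofReal |φ x|)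
                 * (∫⁻ x, ENNReal.ofReal (|v x| / (1 + ‖x‖ ^ ((N:ℝ) + 2*s)))) := by
  classical
  obtain ⟨hs0, hs1⟩ := hs
  set p : ℝ := (N:ℝ) + 2*s with hpdef
  have hp0 : (0:ℝ) < p := by
    have : (0:ℝ) ≤ (N:ℝ) := Nat.cast_nonneg N
    simp only [hpdef]; linarith
  have hNp : (N:ℝ) < p := by simp only [hpdef]; linarith
  have hsub1 : Ω' ⊆ Ω'' := subset_trans subset_closure h1
  have hsub2 : Ω'' ⊆ Ω := subset_trans subset_closure h2
  have hcomp : IsCompact (closure Ω') :=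
    Metric.isCompact_of_isClosed_isBounded isClosed_closure (hΩb.subset (h1.trans hsub2))
  obtain ⟨δ, hδ, hthick⟩ := hcomp.exists_thickening_subset_open hΩ''o h1
  have hdist : ∀ x ∈ Ω', ∀ y, y ∉ Ω'' → δ ≤ ‖x - y‖ := by
    intro x hx y hy
    by_contra hlt
    push_neg at hlt
    apply hy
    apply hthick
    rw [Metric.mem_thickening_iff]
    refine ⟨x, subset_closure hx, ?_⟩
    rwa [dist_comm, dist_eq_norm]
  obtain ⟨R0, hR0⟩ := isBounded_iff_forall_norm_le.mp (hΩb.subset (hsub1.trans hsub2))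
  set R : ℝ := max R0 0 with hRdef
  have hR : ∀ x ∈ Ω', ‖x‖ ≤ R := fun x hx => le_max_of_le_left (hR0 x hx)
  have hRnn : (0:ℝ) ≤ R := le_max_right _ _
  set C₂ : ℝ := δ^(-p) + (R/δ+1)^p with hC₂def
  set K₁ : ℝ≥0∞ :=
    ∫⁻ z in (ball (0:EuclideanSpace ℝ (Fin N)) δ)ᶜ, ENNReal.ofReal (1/‖z‖^p) with hK₁def
  have hK₁ : K₁ < ⊤ := K1_fin N p δ hδ hNp
  refine ⟨K₁ + 1, ENNReal.ofReal C₂ + 1, lt_of_lt_of_le one_pos le_add_self,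
    ENNReal.add_lt_top.2 ⟨hK₁, ENNReal.one_lt_top⟩,
    lt_of_lt_of_le one_pos le_add_self,
    ENNReal.add_lt_top.2 ⟨ENNReal.ofReal_lt_top, ENNReal.one_lt_top⟩, ?_⟩
  intro v φ hv hφ hGv hL hv2 hsupp hGφ hφ2
  set π : Measure (EuclideanSpace ℝ (Fin N) × EuclideanSpace ℝ (Fin N)) := (volume : Measure (EuclideanSpace ℝ (Fin N))).prod (volume : Measure (EuclideanSpace ℝ (Fin N))) with hπdef
  set F : EuclideanSpace ℝ (Fin N) × EuclideanSpace ℝ (Fin N) → ℝ≥0∞ :=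
    fun z => ENNReal.ofReal (|v z.1 - v z.2| * |φ z.1 - φ z.2| / ‖z.1 - z.2‖ ^ p) with hFdef
  have hnormm : Measurable fun z : EuclideanSpace ℝ (Fin N) × EuclideanSpace ℝ (Fin N) => ‖z.1 - z.2‖ ^ p :=
    ((continuous_fst.sub continuous_snd).norm.rpow_const (fun z => Or.inr hp0.le)).measurable
  have hvm : Measurable fun z : EuclideanSpace ℝ (Fin N) × EuclideanSpace ℝ (Fin N) => |v z.1 - v z.2| := by fun_prop
  have hφm : Measurable fun z : EuclideanSpace ℝ (Fin N) × EuclideanSpace ℝ (Fin N) => |φ z.1 - φ z.2| := by fun_prop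
  have hFm : Measurable F := ((hvm.mul hφm).div hnormm).ennreal_ofReal
  set fV : EuclideanSpace ℝ (Fin N) × EuclideanSpace ℝ (Fin N) → ℝ≥0∞ :=
    fun z => ENNReal.ofReal (|v z.1 - v z.2| ^ 2 / ‖z.1 - z.2‖ ^ p) with hfVdef
  set fP : EuclideanSpace ℝ (Fin N) × EuclideanSpace ℝ (Fin N) → ℝ≥0∞ :=
    fun z => ENNReal.ofReal (|φ z.1 - φ z.2| ^ 2 / ‖z.1 - z.2‖ ^ p) with hfPdef
  have hfVm : Measurable fV := (((hvm.pow_const 2)).div hnormm).ennreal_ofReal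
  have hfPm : Measurable fP := (((hφm.pow_const 2)).div hnormm).ennreal_ofReal
  have hS : MeasurableSet (Ω'' ×ˢ Ω'') := hΩ''o.measurableSet.prod hΩ''o.measurableSet
  -- iterated integral = product integral
  have hiter : (∫⁻ x, ∫⁻ y, ENNReal.ofReal (|v x - v y| * |φ x - φ y| / ‖x - y‖ ^ p))
      = ∫⁻ z, F z ∂π := by
    rw [hπdef, ← lintegral_prod _ hFm.aemeasurable]
  -- Part A : Cauchy-Schwarz on Ω'' × Ω''
  have hconj : Real.HolderConjugate 2 2 := Real.HolderConjugate.two_two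
  have hCS : ∫⁻ z in Ω'' ×ˢ Ω'', F z ∂π ≤
      (∫⁻ z in Ω'' ×ˢ Ω'', fV z ∂π) ^ (1/2:ℝ) * (∫⁻ z in Ω'' ×ˢ Ω'', fP z ∂π) ^ (1/2:ℝ) := by
    have hH := ENNReal.lintegral_mul_le_Lp_mul_Lq (π.restrict (Ω'' ×ˢ Ω'')) hconj
      (f := fun z => fV z ^ (1/2:ℝ)) (g := fun z => fP z ^ (1/2:ℝ))
      (ENNReal.continuous_rpow_const.measurable.comp hfVm).aemeasurable
      (ENNReal.continuous_rpow_const.measurable.comp hfPm).aemeasurable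
    have hhalf : ∀ X : ℝ≥0∞, (X ^ (1/2:ℝ)) ^ (2:ℝ) = X := fun X => by
      rw [← ENNReal.rpow_mul]; norm_num
    have hmul : ∀ z : EuclideanSpace ℝ (Fin N) × EuclideanSpace ℝ (Fin N), F z = fV z ^ (1/2:ℝ) * fP z ^ (1/2:ℝ) := fun z =>
      ofReal_cs _ _ _ (abs_nonneg _) (abs_nonneg _) (Real.rpow_nonneg (norm_nonneg _) _)
    simp_rw [Pi.mul_apply, hhalf] at hH
    calc ∫⁻ z in Ω'' ×ˢ Ω'', F z ∂π
        = ∫⁻ z in Ω'' ×ˢ Ω'', fV z ^ (1/2:ℝ) * fP z ^ (1/2:ℝ) ∂π := by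
          exact lintegral_congr hmul
      _ ≤ _ := hH
  have hprodV : ∫⁻ z in Ω'' ×ˢ Ω'', fV z ∂π =
      ∫⁻ x in Ω'', ∫⁻ y in Ω'', ENNReal.ofReal (|v x - v y|^2 / ‖x - y‖^p) := by
    rw [hπdef, ← Measure.prod_restrict, lintegral_prod _ hfVm.aemeasurable]
  have hprodP : ∫⁻ z in Ω'' ×ˢ Ω'', fP z ∂π =
      ∫⁻ x in Ω'', ∫⁻ y in Ω'', ENNReal.ofReal (|φ x - φ y|^2 / ‖x - y‖^p) := by
    rw [hπdef, ← Measure.prod_restrict, lintegral_prod _ hfPm.aemeasurable]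
  have hGveq : gagliardoSq N s v Ω'' = (1/2:ℝ≥0∞) * ∫⁻ z in Ω'' ×ˢ Ω'', fV z ∂π := by
    rw [hprodV, gagliardoSq, ← hpdef]
  have hGφeq : gagliardoSq N s φ Ω'' = (1/2:ℝ≥0∞) * ∫⁻ z in Ω'' ×ˢ Ω'', fP z ∂π := by
    rw [hprodP, gagliardoSq, ← hpdef]
  have hPartA : (1/2:ℝ≥0∞) * ∫⁻ z in Ω'' ×ˢ Ω'', F z ∂π ≤
      (gagliardoSq N s v Ω'') ^ (1/2:ℝ) * (gagliardoSq N s φ Ω'') ^ (1/2:ℝ) := by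
    rw [hGveq, hGφeq, ENNReal.mul_rpow_of_nonneg _ _ (by norm_num),
      ENNReal.mul_rpow_of_nonneg _ _ (by norm_num)]
    have h12 : ((1:ℝ≥0∞)/2) = ((1:ℝ≥0∞)/2)^(1/2:ℝ) * ((1:ℝ≥0∞)/2)^(1/2:ℝ) := by
      rw [← ENNReal.rpow_add _ _ (by norm_num) (by norm_num)]
      norm_num
    calc (1/2:ℝ≥0∞) * ∫⁻ z in Ω'' ×ˢ Ω'', F z ∂π
        ≤ (1/2:ℝ≥0∞) * ((∫⁻ z in Ω'' ×ˢ Ω'', fV z ∂π) ^ (1/2:ℝ) *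
            (∫⁻ z in Ω'' ×ˢ Ω'', fP z ∂π) ^ (1/2:ℝ)) := mul_le_mul_right hCS _
      _ = ((1:ℝ≥0∞)/2)^(1/2:ℝ) * (∫⁻ z in Ω'' ×ˢ Ω'', fV z ∂π) ^ (1/2:ℝ) *
            (((1:ℝ≥0∞)/2)^(1/2:ℝ) * (∫⁻ z in Ω'' ×ˢ Ω'', fP z ∂π) ^ (1/2:ℝ)) := by
          nth_rewrite 1 [h12]
          ring
  -- Part B : off-diagonal
  set A : Set (EuclideanSpace ℝ (Fin N) × EuclideanSpace ℝ (Fin N)) := Ω' ×ˢ Ω''ᶜ with hAdef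
  set A' : Set (EuclideanSpace ℝ (Fin N) × EuclideanSpace ℝ (Fin N)) := Ω''ᶜ ×ˢ Ω' with hA'def
  set Z : Set (EuclideanSpace ℝ (Fin N) × EuclideanSpace ℝ (Fin N)) := {z : EuclideanSpace ℝ (Fin N) × EuclideanSpace ℝ (Fin N) | φ z.1 - φ z.2 = 0} with hZdef
  have hAm : MeasurableSet A := hΩ'o.measurableSet.prod hΩ''o.measurableSet.compl
  have hA'm : MeasurableSet A' := hΩ''o.measurableSet.compl.prod hΩ'o.measurableSet
  have hZm : MeasurableSet Z := by
    have h : Measurable fun z : EuclideanSpace ℝ (Fin N) × EuclideanSpace ℝ (Fin N) => φ z.1 - φ z.2 :=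
      (hφ.comp measurable_fst).sub (hφ.comp measurable_snd)
    exact h (measurableSet_singleton 0)
  have hφzero : ∀ x, x ∉ Ω' → φ x = 0 := fun x hx =>
    image_eq_zero_of_notMem_tsupport fun hc => hx (hsupp hc)
  have hcover : (Ω'' ×ˢ Ω'')ᶜ ⊆ A ∪ A' ∪ Z := by
    rintro ⟨x, y⟩ hz
    rw [Set.mem_compl_iff, Set.mem_prod] at hz
    push_neg at hz
    by_cases hx : x ∈ Ω'
    · exact Or.inl (Or.inl ⟨hx, hz (hsub1 hx)⟩)
    · by_cases hy : y ∈ Ω'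
      · exact Or.inl (Or.inr ⟨fun hx'' => hz hx'' (hsub1 hy), hy⟩)
      · right
        show φ x - φ y = 0
        rw [hφzero x hx, hφzero y hy, sub_zero]
  have hZzero : ∫⁻ z in Z, F z ∂π = 0 := by
    have h0 : ∀ z ∈ Z, F z = 0 := by
      intro z hz
      have hz' : φ z.1 - φ z.2 = 0 := hz
      simp [hFdef, hz']
    calc ∫⁻ z in Z, F z ∂π = ∫⁻ _ in Z, 0 ∂π :=
          setLIntegral_congr_fun hZm h0
      _ = 0 := lintegral_zero
  have hswap : ∫⁻ z in A', F z ∂π = ∫⁻ z in A, F z ∂π := by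
    rw [← lintegral_indicator hA'm, ← lintegral_indicator hAm]
    have hkey : ∀ z : EuclideanSpace ℝ (Fin N) × EuclideanSpace ℝ (Fin N), A'.indicator F z = (A.indicator F) (Prod.swap z) := by
      intro z
      have hmem : Prod.swap z ∈ A ↔ z ∈ A' := by
        rcases z with ⟨x, y⟩
        simp only [hAdef, hA'def, Set.mem_prod, Prod.swap]
        exact and_comm
      have hFval : F (Prod.swap z) = F z := by
        rcases z with ⟨x, y⟩
        simp only [hFdef, Prod.swap]
        rw [norm_sub_rev, abs_sub_comm (v y), abs_sub_comm (φ y)]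
      rw [Set.indicator_apply, Set.indicator_apply]
      by_cases h : z ∈ A'
      · rw [if_pos h, if_pos (hmem.2 h), hFval]
      · rw [if_neg h, if_neg fun c => h (hmem.1 c)]
    simp_rw [hkey]
    exact lintegral_prod_swap (A.indicator F)
  set L : ℝ≥0∞ := ∫⁻ x, ENNReal.ofReal (|v x| / (1 + ‖x‖^p)) with hLdef
  set P : ℝ≥0∞ := ∫⁻ x in Ω', ENNReal.ofReal (|v x| * |φ x|) with hPdef
  set Q : ℝ≥0∞ := ∫⁻ x in Ω', ENNReal.ofReal |φ x| with hQdef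
  have hAbound : ∫⁻ z in A, F z ∂π ≤ K₁ * P + ENNReal.ofReal C₂ * L * Q := by
    rw [hAdef, hπdef, ← Measure.prod_restrict, lintegral_prod _ hFm.aemeasurable]
    have hinner : ∀ x ∈ Ω', (∫⁻ y in Ω''ᶜ, F (x, y)) ≤
        ENNReal.ofReal (|v x| * |φ x|) * K₁ +
          ENNReal.ofReal |φ x| * (ENNReal.ofReal C₂ * L) := by
      intro x hx
      have hstep : ∀ y ∈ Ω''ᶜ, F (x, y) ≤
          ENNReal.ofReal (|v x| * |φ x|) * ENNReal.ofReal (1/‖x - y‖^p) +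
          (ENNReal.ofReal |φ x| * ENNReal.ofReal C₂) *
            ENNReal.ofReal (|v y| / (1 + ‖y‖^p)) := by
        intro y hy
        have hyΩ : y ∉ Ω'' := hy
        have hφy : φ y = 0 := hφzero y fun hc => hyΩ (hsub1 hc)
        have hdxy : δ ≤ ‖x - y‖ := hdist x hx y hyΩ
        have ht0 : (0:ℝ) < ‖x - y‖ := lt_of_lt_of_le hδ hdxy
        have htp : (0:ℝ) < ‖x - y‖^p := Real.rpow_pos_of_pos ht0 p
        have hyp0 : (0:ℝ) < 1 + ‖y‖^p := by positivity
        -- key fraction bound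
        have hyb : ‖y‖ ≤ R + ‖x - y‖ := by
          have h1' : ‖y‖ - ‖x‖ ≤ ‖y - x‖ := norm_sub_norm_le y x
          have h2' : ‖y - x‖ = ‖x - y‖ := norm_sub_rev y x
          have h3' : ‖x‖ ≤ R := hR x hx
          linarith
        have hy2 : ‖y‖ ≤ (R/δ + 1) * ‖x - y‖ := by
          have hRd : R ≤ (R/δ) * ‖x - y‖ := by
            rw [div_mul_eq_mul_div, le_div_iff₀ hδ]
            exact mul_le_mul_of_nonneg_left hdxy hRnn
          have hexp : (R/δ + 1) * ‖x - y‖ = (R/δ) * ‖x - y‖ + ‖x - y‖ := by ring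
          linarith
        have hypow : ‖y‖^p ≤ (R/δ+1)^p * ‖x - y‖^p := by
          rw [← Real.mul_rpow (by positivity) (by positivity)]
          exact Real.rpow_le_rpow (norm_nonneg y) hy2 hp0.le
        have hone : (1:ℝ) ≤ δ^(-p) * ‖x - y‖^p := by
          have h1' : δ^p ≤ ‖x - y‖^p := Real.rpow_le_rpow hδ.le hdxy hp0.le
          have hδp : (0:ℝ) < δ^p := Real.rpow_pos_of_pos hδ p
          rw [Real.rpow_neg hδ.le, inv_mul_eq_div]
          exact (one_le_div hδp).2 h1'
        have hsum : 1 + ‖y‖^p ≤ C₂ * ‖x - y‖^p := by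
          calc 1 + ‖y‖^p ≤ δ^(-p) * ‖x - y‖^p + (R/δ+1)^p * ‖x - y‖^p :=
                add_le_add hone hypow
            _ = C₂ * ‖x - y‖^p := by rw [hC₂def]; ring
        have hfrac : 1/‖x - y‖^p ≤ C₂/(1 + ‖y‖^p) := by
          rw [div_le_div_iff₀ htp hyp0]
          linarith
        -- pointwise estimate
        have hstep1 : F (x, y) ≤ ENNReal.ofReal ((|v x| + |v y|) * |φ x| / ‖x - y‖^p) := by
          simp only [hFdef]
          apply ENNReal.ofReal_le_ofReal
          rw [hφy, sub_zero]
          gcongr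
          exact abs_sub _ _
        refine hstep1.trans ?_
        rw [add_mul, add_div, ENNReal.ofReal_add (by positivity) (by positivity)]
        refine add_le_add (le_of_eq ?_) ?_
        · rw [← ENNReal.ofReal_mul (by positivity), mul_one_div]
        · rw [← ENNReal.ofReal_mul (abs_nonneg _), ← ENNReal.ofReal_mul (by positivity)]
          apply ENNReal.ofReal_le_ofReal
          calc |v y| * |φ x| / ‖x - y‖^p = |φ x| * (|v y| * (1/‖x - y‖^p)) := by ring
            _ ≤ |φ x| * (|v y| * (C₂/(1 + ‖y‖^p))) := by
                refine mul_le_mul_of_nonneg_left ?_ (abs_nonneg _)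
                exact mul_le_mul_of_nonneg_left hfrac (abs_nonneg _)
            _ = |φ x| * C₂ * (|v y| / (1 + ‖y‖^p)) := by ring
      calc (∫⁻ y in Ω''ᶜ, F (x, y))
          ≤ ∫⁻ y in Ω''ᶜ, (ENNReal.ofReal (|v x| * |φ x|) * ENNReal.ofReal (1/‖x - y‖^p) +
              (ENNReal.ofReal |φ x| * ENNReal.ofReal C₂) *
                ENNReal.ofReal (|v y| / (1 + ‖y‖^p))) := by
            refine setLIntegral_mono ?_ hstep
            apply Measurable.fun_add
            · apply Measurable.const_mul
              apply Measurable.ennreal_ofReal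
              apply Measurable.const_div
              exact (continuous_const.sub continuous_id).norm.rpow_const
                (fun _ => Or.inr hp0.le) |>.measurable
            · apply Measurable.const_mul
              apply Measurable.ennreal_ofReal
              exact (hv.abs.div ((continuous_const.add
                (continuous_norm.rpow_const (fun _ => Or.inr hp0.le))).measurable))
        _ = ENNReal.ofReal (|v x| * |φ x|) * (∫⁻ y in Ω''ᶜ, ENNReal.ofReal (1/‖x - y‖^p)) +
            (ENNReal.ofReal |φ x| * ENNReal.ofReal C₂) *
              (∫⁻ y in Ω''ᶜ, ENNReal.ofReal (|v y| / (1 + ‖y‖^p))) := by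
            rw [lintegral_add_left]
            · rw [lintegral_const_mul'' _ (by fun_prop), lintegral_const_mul'']
              apply AEMeasurable.ennreal_ofReal
              apply Measurable.aemeasurable
              exact (hv.abs.div ((continuous_const.add
                (continuous_norm.rpow_const (fun _ => Or.inr hp0.le))).measurable))
            · apply Measurable.const_mul
              apply Measurable.ennreal_ofReal
              apply Measurable.const_div
              exact (continuous_const.sub continuous_id).norm.rpow_const
                (fun _ => Or.inr hp0.le) |>.measurable
        _ ≤ ENNReal.ofReal (|v x| * |φ x|) * K₁ +
            ENNReal.ofReal |φ x| * (ENNReal.ofReal C₂ * L) := by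
            refine add_le_add (mul_le_mul_right ?_ _) ?_
            · have hss : Ω''ᶜ ⊆ (ball x δ)ᶜ := by
                intro y hy
                simp only [Set.mem_compl_iff, Metric.mem_ball, not_lt]
                rw [dist_comm, dist_eq_norm]
                exact hdist x hx y hy
              calc (∫⁻ y in Ω''ᶜ, ENNReal.ofReal (1/‖x - y‖^p))
                  ≤ ∫⁻ y in (ball x δ)ᶜ, ENNReal.ofReal (1/‖x - y‖^p) :=
                    lintegral_mono_set hss
                _ = K₁ := by rw [hK₁def]; exact K1_translate N p δ x
            · rw [mul_assoc]
              refine mul_le_mul_right (mul_le_mul_right ?_ _) _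
              exact lintegral_mono' Measure.restrict_le_self le_rfl
    calc (∫⁻ x in Ω', ∫⁻ y in Ω''ᶜ, F (x, y))
        ≤ ∫⁻ x in Ω', (ENNReal.ofReal (|v x| * |φ x|) * K₁ +
            ENNReal.ofReal |φ x| * (ENNReal.ofReal C₂ * L)) := by
          refine setLIntegral_mono ?_ hinner
          exact (((hv.abs.mul hφ.abs).ennreal_ofReal).mul_const _).add
            ((hφ.abs.ennreal_ofReal).mul_const _)
      _ = P * K₁ + Q * (ENNReal.ofReal C₂ * L) := by
          rw [lintegral_add_left (((hv.abs.fun_mul hφ.abs).ennreal_ofReal).mul_const _),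
            lintegral_mul_const _ ((hv.abs.fun_mul hφ.abs).ennreal_ofReal),
            lintegral_mul_const _ (hφ.abs.ennreal_ofReal)]
      _ = K₁ * P + ENNReal.ofReal C₂ * L * Q := by ring
  -- Hölder on Ω'
  have hP : P ≤ (∫⁻ x in Ω', ENNReal.ofReal (|v x|^2)) ^ (1/2:ℝ) *
      (∫⁻ x in Ω', ENNReal.ofReal (|φ x|^2)) ^ (1/2:ℝ) := by
    have hH := ENNReal.lintegral_mul_le_Lp_mul_Lq ((volume : Measure (EuclideanSpace ℝ (Fin N))).restrict Ω') hconj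
      (f := fun x => ENNReal.ofReal |v x|) (g := fun x => ENNReal.ofReal |φ x|)
      (hv.abs.ennreal_ofReal).aemeasurable (hφ.abs.ennreal_ofReal).aemeasurable
    have e1 : ∀ (w : EuclideanSpace ℝ (Fin N) → ℝ) (x : EuclideanSpace ℝ (Fin N)), (ENNReal.ofReal |w x|) ^ (2:ℝ) =
        ENNReal.ofReal (|w x|^2) := by
      intro w x
      rw [ENNReal.ofReal_rpow_of_nonneg (abs_nonneg _) (by norm_num)]
      norm_num
    simp_rw [Pi.mul_apply, e1] at hH
    calc P = ∫⁻ x in Ω', ENNReal.ofReal |v x| * ENNReal.ofReal |φ x| := by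
          rw [hPdef]
          exact lintegral_congr fun x => ENNReal.ofReal_mul (abs_nonneg _)
      _ ≤ _ := hH
  -- assemble
  rw [hiter, ← lintegral_add_compl F hS, mul_add]
  have hB2 : (1/2:ℝ≥0∞) * ∫⁻ z in (Ω'' ×ˢ Ω'')ᶜ, F z ∂π ≤ ∫⁻ z in A, F z ∂π := by
    have hc : ∫⁻ z in (Ω'' ×ˢ Ω'')ᶜ, F z ∂π ≤
        ∫⁻ z in A, F z ∂π + ∫⁻ z in A, F z ∂π := by
      calc ∫⁻ z in (Ω'' ×ˢ Ω'')ᶜ, F z ∂π ≤ ∫⁻ z in A ∪ A' ∪ Z, F z ∂π :=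
            lintegral_mono_set hcover
        _ ≤ (∫⁻ z in A ∪ A', F z ∂π) + ∫⁻ z in Z, F z ∂π := lintegral_union_le _ _ _
        _ ≤ (∫⁻ z in A, F z ∂π) + (∫⁻ z in A', F z ∂π) + 0 := by
            rw [hZzero]
            exact add_le_add (lintegral_union_le _ _ _) le_rfl
        _ = ∫⁻ z in A, F z ∂π + ∫⁻ z in A, F z ∂π := by rw [hswap, add_zero]
    calc (1/2:ℝ≥0∞) * ∫⁻ z in (Ω'' ×ˢ Ω'')ᶜ, F z ∂π
        ≤ (1/2:ℝ≥0∞) * (∫⁻ z in A, F z ∂π + ∫⁻ z in A, F z ∂π) := mul_le_mul_right hc _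
      _ = ∫⁻ z in A, F z ∂π := by
          rw [← two_mul, ← mul_assoc, one_div,
            ENNReal.inv_mul_cancel two_ne_zero ENNReal.ofNat_ne_top, one_mul]
  have main1 : (1/2:ℝ≥0∞) * (∫⁻ z in Ω'' ×ˢ Ω'', F z ∂π) +
      (1/2:ℝ≥0∞) * (∫⁻ z in (Ω'' ×ˢ Ω'')ᶜ, F z ∂π) ≤
      (gagliardoSq N s v Ω'') ^ (1/2:ℝ) * (gagliardoSq N s φ Ω'') ^ (1/2:ℝ) +
        (K₁ * ((∫⁻ x in Ω', ENNReal.ofReal (|v x|^2)) ^ (1/2:ℝ) *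
          (∫⁻ x in Ω', ENNReal.ofReal (|φ x|^2)) ^ (1/2:ℝ)) + ENNReal.ofReal C₂ * L * Q) :=
    add_le_add hPartA (hB2.trans (hAbound.trans
      (add_le_add (mul_le_mul_right hP K₁) le_rfl)))
  refine main1.trans ?_
  have t1 : K₁ * ((∫⁻ x in Ω', ENNReal.ofReal (|v x|^2)) ^ (1/2:ℝ) *
      (∫⁻ x in Ω', ENNReal.ofReal (|φ x|^2)) ^ (1/2:ℝ)) ≤
      (K₁ + 1) * (∫⁻ x in Ω', ENNReal.ofReal (|v x|^2)) ^ (1/2:ℝ) *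
        (∫⁻ x in Ω', ENNReal.ofReal (|φ x|^2)) ^ (1/2:ℝ) := by
    rw [mul_assoc]
    exact mul_le_mul_left le_self_add _
  have t2 : ENNReal.ofReal C₂ * L * Q ≤ (ENNReal.ofReal C₂ + 1) * Q * L := by
    calc ENNReal.ofReal C₂ * L * Q = ENNReal.ofReal C₂ * (Q * L) := by ring
      _ ≤ (ENNReal.ofReal C₂ + 1) * (Q * L) := mul_le_mul_left le_self_add _
      _ = (ENNReal.ofReal C₂ + 1) * Q * L := by ring
  calc (gagliardoSq N s v Ω'') ^ (1/2:ℝ) * (gagliardoSq N s φ Ω'') ^ (1/2:ℝ) +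
        (K₁ * ((∫⁻ x in Ω', ENNReal.ofReal (|v x|^2)) ^ (1/2:ℝ) *
          (∫⁻ x in Ω', ENNReal.ofReal (|φ x|^2)) ^ (1/2:ℝ)) + ENNReal.ofReal C₂ * L * Q)
      = (gagliardoSq N s v Ω'') ^ (1/2:ℝ) * (gagliardoSq N s φ Ω'') ^ (1/2:ℝ) +
        K₁ * ((∫⁻ x in Ω', ENNReal.ofReal (|v x|^2)) ^ (1/2:ℝ) *
          (∫⁻ x in Ω', ENNReal.ofReal (|φ x|^2)) ^ (1/2:ℝ)) + ENNReal.ofReal C₂ * L * Q := by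
        ring
    _ ≤ (gagliardoSq N s v Ω'') ^ (1/2:ℝ) * (gagliardoSq N s φ Ω'') ^ (1/2:ℝ) +
        (K₁ + 1) * (∫⁻ x in Ω', ENNReal.ofReal (|v x|^2)) ^ (1/2:ℝ) *
          (∫⁻ x in Ω', ENNReal.ofReal (|φ x|^2)) ^ (1/2:ℝ) +
        (ENNReal.ofReal C₂ + 1) * Q * L :=
      add_le_add (add_le_add le_rfl t1) t2
end
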